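/- Let f : ℂ → ℂ be a bijective entire function and g : ℂ → ℂ an entire function such that g(z)² = f'(z) for all z. Then g is constant, and there exist a, b ∈ ℂ with a ≠ 0, g² = a (as a constant), and f(z) = a z + b for all z. -/

import Mathlib

open Filter Topology Polynomial Set Metric Bornology

lemma poly_of_growth : ∀ (n : ℕ) (h : ℂ → ℂ), Differentiable ℂ h →
    (∃ C R : ℝ, ∀ z : ℂ, R ≤ ‖z‖ → ‖h z‖ ≤ C * ‖z‖ ^ n) →
    ∃ p : Polynomial ℂ, ∀ z, h z = p.eval z := by
  intro n
  induction n with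
  | zero =>
    rintro h hd ⟨C, R, hCR⟩
    have hbd : IsBounded (Set.range h) := by
      obtain ⟨M, hM⟩ := (isCompact_closedBall (0:ℂ) (max R 0)).exists_bound_of_continuousOn
        hd.continuous.continuousOn
      refine isBounded_iff_forall_norm_le.2 ⟨max C M, ?_⟩
      rintro _ ⟨z, rfl⟩
      rcases le_total ‖z‖ (max R 0) with hz | hz
      · exact le_trans (hM z (by simpa [mem_closedBall, Complex.dist_eq] using hz))
          (le_max_right _ _)
      · exact le_trans (by simpa using hCR z (le_trans (le_max_left _ _) hz)) (le_max_left _ _)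
    exact ⟨Polynomial.C (h 0), fun z => by
      simpa using hd.apply_eq_apply_of_bounded hbd z 0⟩
  | succ n ih =>
    rintro h hd ⟨C, R, hCR⟩
    have hd1 : Differentiable ℂ (dslope h 0) := by
      rw [← differentiableOn_univ]
      exact (Complex.differentiableOn_dslope (c := (0:ℂ)) univ_mem).2 hd.differentiableOn
    have key : ∀ z : ℂ, z * dslope h 0 z = h z - h 0 := fun z => by
      simpa using sub_smul_dslope h 0 z
    have hbnd : ∀ z : ℂ, max R 1 ≤ ‖z‖ → ‖dslope h 0 z‖ ≤ (C + ‖h 0‖) * ‖z‖ ^ n := by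
      intro z hz
      have hz1 : (1:ℝ) ≤ ‖z‖ := le_trans (le_max_right _ _) hz
      have hz0 : z ≠ 0 := by
        intro h0; rw [h0] at hz1; simp at hz1; linarith
      have hne : ‖z‖ ≠ 0 := by positivity
      have h1 : ‖dslope h 0 z‖ = ‖h z - h 0‖ / ‖z‖ := by
        rw [← key z, norm_mul, mul_comm, mul_div_assoc, div_self hne, mul_one]
      rw [h1, div_le_iff₀ (by positivity)]
      have h2 : ‖h z - h 0‖ ≤ C * ‖z‖ ^ (n+1) + ‖h 0‖ :=
        le_trans (norm_sub_le _ _) (by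
          have := hCR z (le_trans (le_max_left _ _) hz); linarith)
      have h3 : C * ‖z‖ ^ (n+1) + ‖h 0‖ ≤ (C + ‖h 0‖) * ‖z‖ ^ n * ‖z‖ := by
        have hzn : (1:ℝ) ≤ ‖z‖ ^ n := one_le_pow₀ hz1
        have h0 : (0:ℝ) ≤ ‖h 0‖ := norm_nonneg _
        have hprod : (1:ℝ) ≤ ‖z‖ ^ n * ‖z‖ := by nlinarith
        have h4 := mul_le_mul_of_nonneg_left hprod h0
        rw [pow_succ]
        nlinarith
      linarith
    obtain ⟨p, hp⟩ := ih (dslope h 0) hd1 ⟨C + ‖h 0‖, max R 1, hbnd⟩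
    refine ⟨Polynomial.C (h 0) + Polynomial.X * p, fun z => ?_⟩
    simp only [eval_add, eval_C, eval_mul, eval_X, ← hp]
    rw [key z, add_sub_cancel]

lemma affine_of_inj_poly (p : Polynomial ℂ) (hinj : Function.Injective fun z => p.eval z) :
    ∃ a b : ℂ, a ≠ 0 ∧ ∀ z, p.eval z = a * z + b := by
  have hd0 : p.natDegree ≠ 0 := by
    intro h0
    obtain ⟨k, hk⟩ : ∃ k, p = Polynomial.C k := ⟨_, Polynomial.eq_C_of_natDegree_eq_zero h0⟩
    have h01 : (0:ℂ) = 1 := hinj (by simp [hk])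
    norm_num at h01
  have hd2 : ¬ 2 ≤ p.natDegree := by
    intro hge
    set c := p.eval 0 with hc
    set q := p - Polynomial.C c with hq
    have hqd : q.natDegree = p.natDegree := Polynomial.natDegree_sub_C
    have hq0 : q ≠ 0 := by
      intro h0
      rw [h0] at hqd
      simp at hqd
      omega
    have hroot0 : (0:ℂ) ∈ q.roots := by
      rw [Polynomial.mem_roots hq0]
      simp [hq, hc]
    have hcard : q.roots.card = q.natDegree :=
      Polynomial.splits_iff_card_roots.mp (IsAlgClosed.splits q)
    by_cases hex : ∃ z₁ ∈ q.roots, z₁ ≠ 0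
    · obtain ⟨z₁, hz₁, hz₁0⟩ := hex
      have : p.eval z₁ = c := by
        have := (Polynomial.mem_roots hq0).1 hz₁
        simpa [hq, sub_eq_zero] using this
      exact hz₁0 (hinj (by simpa [hc] using this))
    · push_neg at hex
      have hall : ∀ z ∈ q.roots, z = 0 := hex
      have hrepl : q.roots = Multiset.replicate q.roots.card 0 :=
        Multiset.eq_replicate_card.2 hall
      have hfact := Polynomial.C_leadingCoeff_mul_prod_multiset_X_sub_C
        (p := q) (by rw [hcard])
      rw [hrepl] at hfact
      simp only [Multiset.map_replicate, Multiset.prod_replicate, map_zero, sub_zero] at hfact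
      set m := q.roots.card with hm
      have hm2 : 2 ≤ m := by omega
      have heval : ∀ z : ℂ, q.eval z = q.leadingCoeff * z ^ m := by
        intro z
        conv_lhs => rw [← hfact]
        simp
      obtain ⟨ω, hω⟩ : ∃ ω : ℂ, IsPrimitiveRoot ω m :=
        ⟨_, Complex.isPrimitiveRoot_exp m (by omega)⟩
      have hωpow : ω ^ m = 1 := hω.pow_eq_one
      have hωne : ω ≠ 1 := by
        intro h1
        have : m ∣ 1 := hω.dvd_of_pow_eq_one 1 (by simp [h1])
        have := Nat.le_of_dvd one_pos this
        omega
      have h1 : p.eval ω = p.eval 1 := by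
        have e1 := heval ω
        have e2 := heval 1
        simp only [hq, Polynomial.eval_sub, Polynomial.eval_C] at e1 e2
        rw [hωpow] at e1
        rw [one_pow] at e2
        linear_combination e1 - e2
      exact hωne (hinj h1)
  have hd1 : p.natDegree = 1 := by omega
  have hform := Polynomial.eq_X_add_C_of_natDegree_le_one (le_of_eq hd1)
  refine ⟨p.coeff 1, p.coeff 0, ?_, fun z => ?_⟩
  · intro h0
    have : p.natDegree = 1 := hd1
    have hlc : p.leadingCoeff ≠ 0 := Polynomial.leadingCoeff_ne_zero.2 (by
      intro h; rw [h] at hd1; simp at hd1)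
    rw [Polynomial.leadingCoeff, hd1] at hlc
    exact hlc h0
  · conv_lhs => rw [hform]
    simp

lemma growth_of_bij (f : ℂ → ℂ) (hf : Differentiable ℂ f) (hbij : Function.Bijective f) :
    ∃ (n : ℕ) (C R : ℝ), ∀ z : ℂ, R ≤ ‖z‖ → ‖f z‖ ≤ C * ‖z‖ ^ n := by
  have han : AnalyticOnNhd ℂ f Set.univ := fun z _ => hf.analyticAt z
  have hopen : IsOpenMap f := by
    rcases han.is_constant_or_isOpen isPreconnected_univ with ⟨w, hw⟩ | h
    · exfalso
      have h01 : (0:ℂ) = 1 := hbij.1 (by rw [hw 0 trivial, hw 1 trivial])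
      norm_num at h01
    · exact fun s hs => h s (subset_univ s) hs
  have hproper : Tendsto f (cobounded ℂ) (cobounded ℂ) := by
    have := (Equiv.toHomeomorphOfContinuousOpen (Equiv.ofBijective f hbij)
      hf.continuous hopen).map_cocompact.le
    rw [cobounded_eq_cocompact]
    exact this
  set F : ℂ → ℂ := fun w => if w = 0 then 0 else (f w⁻¹ - f 0)⁻¹ with hFdef
  have hne : ∀ w : ℂ, w ≠ 0 → f w⁻¹ - f 0 ≠ 0 := fun w hw => by
    rw [sub_ne_zero]
    exact fun h => (inv_ne_zero hw) (hbij.1 h)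
  have hFval : ∀ w : ℂ, w ≠ 0 → F w = (f w⁻¹ - f 0)⁻¹ := fun w hw => by
    simp [hFdef, hw]
  have hFne : ∀ w : ℂ, w ≠ 0 → F w ≠ 0 := fun w hw => by
    rw [hFval w hw]
    exact inv_ne_zero (hne w hw)
  have hFdiff : ∀ᶠ w in 𝓝[≠] (0:ℂ), DifferentiableAt ℂ F w := by
    filter_upwards [self_mem_nhdsWithin] with w hw
    have hw : w ≠ 0 := hw
    have hd : DifferentiableAt ℂ (fun w : ℂ => (f w⁻¹ - f 0)⁻¹) w :=
      (((hf _).comp w (differentiableAt_inv hw)).sub_const (f 0)).inv (hne w hw)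
    refine hd.congr_of_eventuallyEq ?_
    filter_upwards [isOpen_compl_singleton.mem_nhds hw] with x hx
    exact hFval x hx
  have hFcont : ContinuousAt F 0 := by
    have h1 : Tendsto (fun w : ℂ => f w⁻¹ - f 0) (𝓝[≠] 0) (cobounded ℂ) := by
      rw [← tendsto_norm_atTop_iff_cobounded]
      have h2 : Tendsto (fun w : ℂ => ‖f w⁻¹‖) (𝓝[≠] (0:ℂ)) atTop := by
        rw [tendsto_norm_atTop_iff_cobounded]
        exact hproper.comp tendsto_inv₀_nhdsNE_zero
      refine tendsto_atTop_mono' _ ?_ (tendsto_atTop_add_const_right _ (-‖f 0‖) h2)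
      filter_upwards with w
      have := norm_sub_norm_le (f w⁻¹) (f 0)
      simpa [sub_eq_add_neg] using this
    have h3 : Tendsto F (𝓝[≠] (0:ℂ)) (𝓝 0) := by
      have h4 := tendsto_inv₀_cobounded.comp h1
      refine h4.congr' ?_
      filter_upwards [self_mem_nhdsWithin] with w hw
      exact (hFval w hw).symm
    have hF0 : F 0 = 0 := by simp [hFdef]
    rw [ContinuousAt, hF0]
    have hsup : 𝓝 (0:ℂ) = 𝓝[≠] 0 ⊔ pure 0 := (nhdsNE_sup_pure 0).symm
    exact (tendsto_sup.2 ⟨h3, by simpa [hF0] using tendsto_pure_nhds F 0⟩).mono_left (le_of_eq hsup)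
  have hFan : AnalyticAt ℂ F 0 :=
    Complex.analyticAt_of_differentiable_on_punctured_nhds_of_continuousAt hFdiff hFcont
  -- order of vanishing
  have hord : analyticOrderAt F 0 ≠ ⊤ := by
    rw [Ne, analyticOrderAt_eq_top]
    intro hev
    have hcon : ∀ᶠ w in 𝓝[≠] (0:ℂ), False := by
      filter_upwards [hev.filter_mono nhdsWithin_le_nhds, self_mem_nhdsWithin] with w h1 h2
      exact hFne w h2 h1
    exact hcon.exists.elim fun _ h => h
  obtain ⟨n, hn⟩ : ∃ n : ℕ, analyticOrderAt F 0 = n := by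
    cases hor : analyticOrderAt F 0 with
    | top => exact absurd hor hord
    | coe n => exact ⟨n, rfl⟩
  obtain ⟨u, hu, hu0, huv⟩ := (hFan.analyticOrderAt_eq_natCast (n := n)).1 hn
  have hu0norm : 0 < ‖u 0‖ := norm_pos_iff.2 hu0
  have hhalf : ‖u 0‖ / 2 < ‖u 0‖ := half_lt_self hu0norm
  have hev2 : ∀ᶠ w in 𝓝 (0:ℂ), F w = (w - 0) ^ n • u w ∧ ‖u 0‖ / 2 ≤ ‖u w‖ :=
    huv.and ((hu.continuousAt.norm.eventually (eventually_gt_nhds hhalf)).mono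
      fun w hw => le_of_lt hw)
  obtain ⟨ε, hε, hball⟩ := Metric.eventually_nhds_iff.1 hev2
  refine ⟨n, ‖f 0‖ + 2 / ‖u 0‖, max (ε⁻¹ + 1) 1, ?_⟩
  intro z hz
  have hz1 : (1:ℝ) ≤ ‖z‖ := le_trans (le_max_right _ _) hz
  have hz0 : z ≠ 0 := by intro h; rw [h] at hz1; simp at hz1; linarith
  have hzinv : ‖z⁻¹‖ < ε := by
    rw [norm_inv]
    have h1 : ε⁻¹ + 1 ≤ ‖z‖ := le_trans (le_max_left _ _) hz
    rw [inv_lt_comm₀ (by linarith [inv_pos.2 hε]) hε]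
    linarith
  obtain ⟨hFeq, hunorm⟩ := hball (y := z⁻¹) (by rw [dist_zero_right]; exact hzinv)
  have hwne : z⁻¹ ≠ 0 := inv_ne_zero hz0
  have huwpos : 0 < ‖u z⁻¹‖ := lt_of_lt_of_le (by linarith) hunorm
  have heq : (f z - f 0)⁻¹ = (z⁻¹) ^ n * u z⁻¹ := by
    have h := hFeq
    rw [hFval _ hwne, inv_inv] at h
    simpa [smul_eq_mul] using h
  have hA : ‖f z - f 0‖ = ‖z‖ ^ n / ‖u z⁻¹‖ := by
    rw [← inv_inv (f z - f 0), heq, norm_inv, norm_mul, norm_pow, norm_inv, inv_pow,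
      mul_inv, inv_inv, div_eq_mul_inv]
  have hbound : ‖f z - f 0‖ ≤ 2 / ‖u 0‖ * ‖z‖ ^ n := by
    rw [hA, div_le_iff₀ huwpos] at *
    have hzn : (0:ℝ) < ‖z‖ ^ n := by positivity
    rw [div_mul_eq_mul_div, div_mul_eq_mul_div, le_div_iff₀ hu0norm] at *
    nlinarith
  have htri : ‖f z‖ ≤ ‖f 0‖ + ‖f z - f 0‖ := by
    calc ‖f z‖ = ‖f 0 + (f z - f 0)‖ := by ring_nf
    _ ≤ ‖f 0‖ + ‖f z - f 0‖ := norm_add_le _ _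
  have hzn1 : (1:ℝ) ≤ ‖z‖ ^ n := one_le_pow₀ hz1
  have hf0 : (0:ℝ) ≤ ‖f 0‖ := norm_nonneg _
  have h2u : (0:ℝ) ≤ 2 / ‖u 0‖ := by positivity
  have : ‖f 0‖ ≤ ‖f 0‖ * ‖z‖ ^ n := le_mul_of_one_le_right hf0 hzn1
  calc ‖f z‖ ≤ ‖f 0‖ + 2 / ‖u 0‖ * ‖z‖ ^ n := by linarith
  _ ≤ (‖f 0‖ + 2 / ‖u 0‖) * ‖z‖ ^ n := by nlinarith

theorem stmt_7 (f g : ℂ → ℂ) (hf : Differentiable ℂ f) (hbij : Function.Bijective f)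
    (hg : Differentiable ℂ g) (hsq : ∀ z, g z ^ 2 = deriv f z) :
    (∀ z w : ℂ, g z = g w) ∧
      ∃ a b : ℂ, a ≠ 0 ∧ (∀ z, g z ^ 2 = a) ∧ ∀ z, f z = a * z + b := by
  obtain ⟨n, C, R, hgr⟩ := growth_of_bij f hf hbij
  obtain ⟨p, hp⟩ := poly_of_growth n f hf ⟨C, R, hgr⟩
  have hinj : Function.Injective fun z => p.eval z := by
    intro x y hxy
    exact hbij.1 (by rw [hp x, hp y]; exact hxy)
  obtain ⟨a, b, ha, hab⟩ := affine_of_inj_poly p hinj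
  have hfz : ∀ z, f z = a * z + b := fun z => by rw [hp z, hab z]
  have hderiv : ∀ z, deriv f z = a := by
    have hfe : f = fun z => a * z + b := funext hfz
    intro z
    rw [hfe]
    simpa using (((hasDerivAt_id z).const_mul a).add_const b).deriv
  have hsqa : ∀ z, g z ^ 2 = a := fun z => by rw [hsq z, hderiv z]
  have hgne : ∀ z, g z ≠ 0 := fun z h0 => ha (by rw [← hsqa z, h0]; ring)
  have hgd : ∀ z, deriv g z = 0 := by
    intro z
    have h2 : deriv (fun z => g z ^ 2) z = 2 * g z * deriv g z := by
      simpa using ((hg z).hasDerivAt.fun_pow 2).deriv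
    have h3 : deriv (fun z => g z ^ 2) z = 0 := by
      have he : (fun z => g z ^ 2) = fun _ => a := funext hsqa
      rw [he]
      simp
    have h4 := h2.symm.trans h3
    rcases mul_eq_zero.1 h4 with h | h
    · rcases mul_eq_zero.1 h with h' | h'
      · norm_num at h'
      · exact absurd h' (hgne z)
    · exact h
  exact ⟨fun z w => is_const_of_deriv_eq_zero hg hgd z w, a, b, ha, hsqa, hfz⟩
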